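/- Let G=(V,E,w) be an edge-weighted graph with E≠∅ and let d be a positive real. If the density of the whole graph satisfies d(V) ≥ d, then there exists a nonempty subset S ⊆ V such that the induced subgraph G[S] is w_min·(⌊⌈d/w_max⌉/2⌋ + 1)-edge-connected and every vertex of G[S] has weighted degree strictly greater than d in G[S]. -/
import Mathlib


open Finset
open scoped Classical

noncomputable section

variable {V : Type*} [Fintype V] [DecidableEq V]

/-- The set of edges of `G` with both endpoints in `S`, i.e. the edge set `E(S)`
of the induced subgraph `G[S]`. -/
def edgesIn (G : SimpleGraph V) (S : Finset V) : Finset (Sym2 V) :=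
  Finset.univ.filter (fun e => e ∈ G.edgeSet ∧ ∀ v ∈ e, v ∈ S)

/-- `w(S)`: the total weight of the edges of the induced subgraph `G[S]`. -/
def wsum (G : SimpleGraph V) (w : Sym2 V → ℝ) (S : Finset V) : ℝ :=
  ∑ e ∈ edgesIn G S, w e

/-- The density `d(S) = w(S)/|S|` of the induced subgraph `G[S]`. -/
def density (G : SimpleGraph V) (w : Sym2 V → ℝ) (S : Finset V) : ℝ :=
  wsum G w S / S.card

/-- The weighted degree of a vertex `v` in the induced subgraph `G[S]`. -/
def wdeg (G : SimpleGraph V) (w : Sym2 V → ℝ) (S : Finset V) (v : V) : ℝ :=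
  ∑ e ∈ (edgesIn G S).filter (fun e => v ∈ e), w e

/-- `G[S]` is `k`-vertex-connected: it has at least `k+1` vertices, and deleting any set
of fewer than `k` vertices leaves a connected graph. -/
def VertexConnected (G : SimpleGraph V) (S : Finset V) (k : ℕ) : Prop :=
  k + 1 ≤ S.card ∧ ∀ D : Finset V, D ⊆ S → D.card < k →
    (G.induce ((S \ D : Finset V) : Set V)).Connected

/-- The edge-weighted graph `G[S]` is `k`-edge-connected: it is connected, and every set `F`
of its edges whose removal disconnects it has total weight at least `k`. -/
def EdgeConnected (G : SimpleGraph V) (w : Sym2 V → ℝ) (S : Finset V) (k : ℝ) : Prop :=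
  (G.induce (S : Set V)).Connected ∧
  ∀ F : Finset (Sym2 V), F ⊆ edgesIn G S →
    ¬ ((G.deleteEdges (F : Set (Sym2 V))).induce (S : Set V)).Connected →
    k ≤ ∑ e ∈ F, w e

lemma mem_edgesIn {G : SimpleGraph V} {S : Finset V} {e : Sym2 V} :
    e ∈ edgesIn G S ↔ e ∈ G.edgeSet ∧ ∀ v ∈ e, v ∈ S := by
  simp [edgesIn]

lemma edgesIn_mono (G : SimpleGraph V) {S T : Finset V} (h : S ⊆ T) :
    edgesIn G S ⊆ edgesIn G T := by
  intro e he
  rw [mem_edgesIn] at he ⊢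
  exact ⟨he.1, fun v hv => h (he.2 v hv)⟩

lemma edgesIn_edge {G : SimpleGraph V} {S : Finset V} {e : Sym2 V}
    (h : e ∈ edgesIn G S) : e ∈ G.edgeSet :=
  (mem_edgesIn.1 h).1

lemma edgesIn_erase (G : SimpleGraph V) (S : Finset V) (v : V) :
    edgesIn G (S.erase v) = (edgesIn G S).filter (fun e => ¬ v ∈ e) := by
  ext e
  rw [Finset.mem_filter, mem_edgesIn, mem_edgesIn]
  constructor
  · rintro ⟨he, h⟩
    exact ⟨⟨he, fun x hx => (Finset.mem_erase.1 (h x hx)).2⟩,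
      fun hv => (Finset.mem_erase.1 (h v hv)).1 rfl⟩
  · rintro ⟨⟨he, h⟩, hv⟩
    exact ⟨he, fun x hx => Finset.mem_erase.2 ⟨fun hxv => hv (hxv ▸ hx), h x hx⟩⟩

lemma wsum_erase (G : SimpleGraph V) (w : Sym2 V → ℝ) (S : Finset V) (v : V) :
    wsum G w S = wsum G w (S.erase v) + wdeg G w S v := by
  rw [wsum, wsum, wdeg, edgesIn_erase]
  rw [add_comm, Finset.sum_filter_add_sum_filter_not]

lemma edgesIn_singleton (G : SimpleGraph V) (v : V) : edgesIn G {v} = ∅ := by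
  ext e
  induction e using Sym2.ind with
  | _ a b =>
    simp only [mem_edgesIn, Finset.notMem_empty, iff_false, not_and]
    intro he h
    have ha := Finset.mem_singleton.1 (h a (Sym2.mem_iff.2 (Or.inl rfl)))
    have hb := Finset.mem_singleton.1 (h b (Sym2.mem_iff.2 (Or.inr rfl)))
    exact G.irrefl (ha ▸ hb ▸ (G.mem_edgeSet.1 he))

lemma sum_union_le_re {α : Type*} [DecidableEq α] {s t : Finset α} {f : α → ℝ}
    (h : ∀ a ∈ s ∩ t, 0 ≤ f a) :
    ∑ a ∈ s ∪ t, f a ≤ ∑ a ∈ s, f a + ∑ a ∈ t, f a := by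
  have h1 := Finset.sum_union_inter (s₁ := s) (s₂ := t) (f := f)
  have h2 : 0 ≤ ∑ a ∈ s ∩ t, f a := Finset.sum_nonneg h
  linarith

/-- Key lemma: if `S` contains no "good" subset `T`, then `w(S) ≤ d(|S|-1)`. -/
lemma mader_key (G : SimpleGraph V) (w : Sym2 V → ℝ) (hw : ∀ e ∈ G.edgeSet, 0 ≤ w e)
    (d : ℝ) (t : ℕ)
    (hc : ∀ F : Finset (Sym2 V), F ⊆ edgesIn G Finset.univ → F.card ≤ t →
      ∑ e ∈ F, w e ≤ d) :
    ∀ S : Finset V, S.Nonempty →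
      (¬ ∃ T : Finset V, T ⊆ S ∧ T.Nonempty ∧ (G.induce (T : Set V)).Connected ∧
        (∀ F : Finset (Sym2 V), F ⊆ edgesIn G T →
          ¬ ((G.deleteEdges (F : Set (Sym2 V))).induce (T : Set V)).Connected →
          t + 1 ≤ F.card) ∧
        (∀ v ∈ T, d < wdeg G w T v)) →
      wsum G w S ≤ d * (S.card - 1) := by
  intro S
  induction S using Finset.strongInduction with
  | _ S ih =>
    intro hS hno
    have hd0 : 0 ≤ d := by simpa using hc ∅ (by simp) (by simp)
    by_cases hdeg : ∃ v ∈ S, wdeg G w S v ≤ d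
    · obtain ⟨v, hv, hvd⟩ := hdeg
      rcases Finset.eq_empty_or_nonempty (S.erase v) with hcase | hcase
      · have hSv : S = {v} := by
          apply Finset.eq_singleton_iff_unique_mem.2
          refine ⟨hv, fun x hx => ?_⟩
          by_contra hxv
          exact Finset.notMem_empty x (hcase ▸ Finset.mem_erase.2 ⟨hxv, hx⟩)
        rw [hSv, wsum, edgesIn_singleton]
        simp
      · have h1 : wsum G w (S.erase v) ≤ d * ((S.erase v).card - 1) := by
          refine ih _ (Finset.erase_ssubset hv) hcase ?_
          rintro ⟨T, hT, rest⟩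
          exact hno ⟨T, hT.trans (Finset.erase_subset v S), rest⟩
        have h2 := wsum_erase G w S v
        have hcard : (S.card : ℝ) = ((S.erase v).card : ℝ) + 1 := by
          have := Finset.card_erase_of_mem hv
          have hpos : 1 ≤ S.card := Finset.card_pos.2 hS
          have : (S.erase v).card + 1 = S.card := by omega
          exact_mod_cast this.symm
        rw [h2, hcard]
        linarith
    · push_neg at hdeg
      -- S itself is not good, all degrees > d, so there is a small disconnecting cut F
      have hF : ∃ F : Finset (Sym2 V), F ⊆ edgesIn G S ∧ F.card ≤ t ∧
          ¬ ((G.deleteEdges (F : Set (Sym2 V))).induce (S : Set V)).Connected := by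
        by_cases hconn : (G.induce (S : Set V)).Connected
        · by_contra hFn
          push_neg at hFn
          refine hno ⟨S, Finset.Subset.refl S, hS, hconn, ?_, hdeg⟩
          intro F hFs hnc
          by_contra hlt
          push_neg at hlt
          exact hnc (hFn F hFs (by omega))
        · refine ⟨∅, by simp, by simp, ?_⟩
          rw [Finset.coe_empty, SimpleGraph.deleteEdges_empty]
          exact hconn
      obtain ⟨F, hFS, hFt, hFnc⟩ := hF
      set H := (G.deleteEdges (F : Set (Sym2 V))).induce (S : Set V) with hH
      obtain ⟨s₀, hs₀⟩ := hS
      have hne : Nonempty ((S : Set V) : Type _) := ⟨⟨s₀, by exact_mod_cast hs₀⟩⟩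
      have hpre : ¬ H.Preconnected := fun h => hFnc ⟨h⟩
      rw [SimpleGraph.Preconnected] at hpre
      push_neg at hpre
      obtain ⟨a, b, hab⟩ := hpre
      set A := S.filter (fun z => ∃ h : z ∈ (S : Set V), H.Reachable a ⟨z, h⟩) with hA
      set B := S \ A with hB
      have hAS : A ⊆ S := Finset.filter_subset _ _
      have hBS : B ⊆ S := Finset.sdiff_subset
      have haA : (a : V) ∈ A := by
        rw [hA, Finset.mem_filter]
        exact ⟨by exact_mod_cast a.2, ⟨a.2, SimpleGraph.Reachable.refl a⟩⟩
      have hbB : (b : V) ∈ B := by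
        rw [hB, Finset.mem_sdiff]
        refine ⟨by exact_mod_cast b.2, fun hbA => ?_⟩
        rw [hA, Finset.mem_filter] at hbA
        obtain ⟨_, _, hreach⟩ := hbA
        exact hab hreach
      -- a step lemma: adjacency off F preserves membership in A
      have step : ∀ x y : V, x ∈ A → y ∈ S → G.Adj x y → s(x, y) ∉ F → y ∈ A := by
        intro x y hx hy hxy hnF
        rw [hA, Finset.mem_filter] at hx
        obtain ⟨hxS, hxh, hreach⟩ := hx
        have hyS : y ∈ (S : Set V) := by exact_mod_cast hy
        rw [hA, Finset.mem_filter]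
        refine ⟨hy, hyS, hreach.trans (SimpleGraph.Adj.reachable ?_)⟩
        show H.Adj ⟨x, hxh⟩ ⟨y, hyS⟩
        refine SimpleGraph.deleteEdges_adj.2 ⟨hxy, ?_⟩
        simpa using hnF
      have hcross : ∀ e ∈ edgesIn G S, e ∈ (edgesIn G A ∪ edgesIn G B) ∪ F := by
        intro e he
        induction e using Sym2.ind with
        | _ u v =>
          obtain ⟨hee, hmem⟩ := mem_edgesIn.1 he
          have hu : u ∈ S := hmem u (Sym2.mem_iff.2 (Or.inl rfl))
          have hvS : v ∈ S := hmem v (Sym2.mem_iff.2 (Or.inr rfl))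
          have hadj : G.Adj u v := G.mem_edgeSet.1 hee
          by_cases huF : s(u, v) ∈ F
          · exact Finset.mem_union_right _ huF
          by_cases hu' : u ∈ A
          · have hv' : v ∈ A := step u v hu' hvS hadj huF
            refine Finset.mem_union_left _ (Finset.mem_union_left _ ?_)
            rw [mem_edgesIn]
            refine ⟨hee, fun x hx => ?_⟩
            rcases Sym2.mem_iff.1 hx with h | h
            · exact h ▸ hu'
            · exact h ▸ hv'
          · have hv' : v ∉ A := by
              intro hvA
              exact hu' (step v u hvA hu hadj.symm (by rwa [Sym2.eq_swap]))
            refine Finset.mem_union_left _ (Finset.mem_union_right _ ?_)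
            rw [mem_edgesIn]
            refine ⟨hee, fun x hx => ?_⟩
            rcases Sym2.mem_iff.1 hx with h | h
            · exact h ▸ (Finset.mem_sdiff.2 ⟨hu, hu'⟩)
            · exact h ▸ (Finset.mem_sdiff.2 ⟨hvS, hv'⟩)
      have hnn : ∀ e ∈ (edgesIn G A ∪ edgesIn G B) ∪ F, 0 ≤ w e := by
        intro e he
        apply hw
        rcases Finset.mem_union.1 he with h | h
        · rcases Finset.mem_union.1 h with h' | h'
          · exact edgesIn_edge h'
          · exact edgesIn_edge h'
        · exact edgesIn_edge (hFS h)
      have h1 : wsum G w S ≤ ∑ e ∈ (edgesIn G A ∪ edgesIn G B) ∪ F, w e :=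
        Finset.sum_le_sum_of_subset_of_nonneg hcross (fun e he _ => hnn e he)
      have h2 : ∑ e ∈ (edgesIn G A ∪ edgesIn G B) ∪ F, w e ≤
          (∑ e ∈ edgesIn G A ∪ edgesIn G B, w e) + ∑ e ∈ F, w e := by
        apply sum_union_le_re
        intro e he
        exact hnn e (Finset.mem_union_left _ (Finset.mem_inter.1 he).1)
      have h3 : ∑ e ∈ edgesIn G A ∪ edgesIn G B, w e ≤ wsum G w A + wsum G w B := by
        apply sum_union_le_re
        intro e he
        exact hw e (edgesIn_edge (Finset.mem_inter.1 he).1)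
      have hAne : A.Nonempty := ⟨_, haA⟩
      have hBne : B.Nonempty := ⟨_, hbB⟩
      have hAss : A ⊂ S := by
        refine Finset.ssubset_iff_of_subset hAS |>.2 ⟨(b : V), hBS hbB, ?_⟩
        exact (Finset.mem_sdiff.1 hbB).2
      have hBss : B ⊂ S := by
        refine Finset.ssubset_iff_of_subset hBS |>.2 ⟨(a : V), hAS haA, ?_⟩
        intro haB
        exact (Finset.mem_sdiff.1 haB).2 haA
      have hnoA : wsum G w A ≤ d * (A.card - 1) := by
        refine ih _ hAss hAne ?_
        rintro ⟨T, hT, rest⟩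
        exact hno ⟨T, hT.trans hAS, rest⟩
      have hnoB : wsum G w B ≤ d * (B.card - 1) := by
        refine ih _ hBss hBne ?_
        rintro ⟨T, hT, rest⟩
        exact hno ⟨T, hT.trans hBS, rest⟩
      have hFd : ∑ e ∈ F, w e ≤ d :=
        hc F (hFS.trans (edgesIn_mono G (Finset.subset_univ S))) hFt
      have hcards : (A.card : ℝ) + (B.card : ℝ) = (S.card : ℝ) := by
        have h4 : B.card = S.card - A.card := by rw [hB]; exact Finset.card_sdiff_of_subset hAS
        have h5 : A.card ≤ S.card := Finset.card_le_card hAS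
        have : A.card + B.card = S.card := by omega
        exact_mod_cast this
      have hfin : d * ((A.card : ℝ) - 1) + d * ((B.card : ℝ) - 1) + d
          = d * ((S.card : ℝ) - 1) := by
        rw [← hcards]; ring
      linarith

/-- Corollary (edge-connectivity Mader): if the edge-weighted graph `G` has density at least
`d > 0`, then there is a nonempty `S ⊆ V` such that `G[S]` is
`wmin·(⌊⌈d/wmax⌉/2⌋ + 1)`-edge-connected and every vertex of `G[S]` has weighted degree
greater than `d` in `G[S]`. -/
theorem mader_weighted_edge (G : SimpleGraph V) (w : Sym2 V → ℝ)
    (hE : (edgesIn G Finset.univ).Nonempty)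
    (hw : ∀ e ∈ G.edgeSet, 0 < w e)
    (d : ℝ) (hd : 0 < d)
    (hdens : density G w Finset.univ ≥ d) :
    ∃ S : Finset V, S.Nonempty ∧
      EdgeConnected G w S
        ((edgesIn G Finset.univ).inf' hE w *
          ((⌈d / (edgesIn G Finset.univ).sup' hE w⌉₊ / 2 + 1 : ℕ) : ℝ)) ∧
      ∀ v ∈ S, d < wdeg G w S v := by
  set wmax := (edgesIn G Finset.univ).sup' hE w with hwmax
  set wmin := (edgesIn G Finset.univ).inf' hE w with hwmind
  set t : ℕ := ⌈d / wmax⌉₊ / 2 with ht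
  have hwmaxpos : 0 < wmax := by
    obtain ⟨e, he⟩ := hE
    exact lt_of_lt_of_le (hw e (edgesIn_edge he)) (Finset.le_sup' w he)
  have hwminpos : 0 < wmin := by
    obtain ⟨e, he, hmin⟩ := Finset.exists_mem_eq_inf' hE w
    rw [hwmind, hmin]
    exact hw e (edgesIn_edge he)
  have htw : (t : ℝ) * wmax ≤ d := by
    rcases Nat.lt_or_ge ⌈d / wmax⌉₊ 2 with h2 | h2
    · have ht0 : t = 0 := by omega
      rw [ht0]
      simpa using hd.le
    · have hx : (1 : ℝ) < d / wmax := by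
        by_contra hle
        push_neg at hle
        have : ⌈d / wmax⌉₊ ≤ 1 := Nat.ceil_le.2 (by simpa using hle)
        omega
      have hwd : wmax < d := by
        rw [lt_div_iff₀ hwmaxpos] at hx; linarith
      have hql : (⌈d / wmax⌉₊ : ℝ) < d / wmax + 1 :=
        Nat.ceil_lt_add_one (le_of_lt (div_pos hd hwmaxpos))
      have htq : (t : ℝ) ≤ (⌈d / wmax⌉₊ : ℝ) / 2 := by
        rw [ht]
        exact_mod_cast Nat.cast_div_le
      have hdw : d / wmax * wmax = d := div_mul_cancel₀ d (ne_of_gt hwmaxpos)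
      nlinarith
  have hc : ∀ F : Finset (Sym2 V), F ⊆ edgesIn G Finset.univ → F.card ≤ t →
      ∑ e ∈ F, w e ≤ d := by
    intro F hF hcard
    have hb : ∀ e ∈ F, w e ≤ wmax := fun e he => Finset.le_sup' w (hF he)
    have h1 : ∑ e ∈ F, w e ≤ F.card • wmax := Finset.sum_le_card_nsmul F w wmax hb
    have h2 : (F.card : ℝ) * wmax ≤ (t : ℝ) * wmax := by
      apply mul_le_mul_of_nonneg_right _ hwmaxpos.le
      exact_mod_cast hcard
    rw [nsmul_eq_mul] at h1
    linarith
  by_cases hT : ∃ T : Finset V, T ⊆ Finset.univ ∧ T.Nonempty ∧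
      (G.induce (T : Set V)).Connected ∧
      (∀ F : Finset (Sym2 V), F ⊆ edgesIn G T →
        ¬ ((G.deleteEdges (F : Set (Sym2 V))).induce (T : Set V)).Connected →
        t + 1 ≤ F.card) ∧
      (∀ v ∈ T, d < wdeg G w T v)
  · obtain ⟨T, _, hTne, hconn, hcut, hdeg⟩ := hT
    refine ⟨T, hTne, ⟨hconn, ?_⟩, hdeg⟩
    intro F hF hnc
    have hcard := hcut F hF hnc
    have hlow : ∀ e ∈ F, wmin ≤ w e := fun e he =>
      Finset.inf'_le w (edgesIn_mono G (Finset.subset_univ T) (hF he))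
    have h1 : F.card • wmin ≤ ∑ e ∈ F, w e := Finset.card_nsmul_le_sum F w wmin hlow
    rw [nsmul_eq_mul] at h1
    have h2 : ((t + 1 : ℕ) : ℝ) ≤ (F.card : ℝ) := by exact_mod_cast hcard
    have h3 : ((t + 1 : ℕ) : ℝ) * wmin ≤ (F.card : ℝ) * wmin :=
      mul_le_mul_of_nonneg_right h2 hwminpos.le
    calc wmin * ((t + 1 : ℕ) : ℝ) = ((t + 1 : ℕ) : ℝ) * wmin := by ring
      _ ≤ (F.card : ℝ) * wmin := h3
      _ ≤ ∑ e ∈ F, w e := h1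
  · exfalso
    have hkey := mader_key G w (fun e he => (hw e he).le) d t hc Finset.univ ?_ hT
    · have hnV : Nonempty V := by
        obtain ⟨e, _⟩ := hE
        exact Sym2.ind (f := fun _ => Nonempty V) (fun a _ => ⟨a⟩) e
      have hn1 : 1 ≤ (Finset.univ : Finset V).card := Finset.card_pos.2 Finset.univ_nonempty
      have hnpos : (0 : ℝ) < ((Finset.univ : Finset V).card : ℝ) := by exact_mod_cast hn1
      rw [density, ge_iff_le, le_div_iff₀ hnpos] at hdens
      have : d * ((Finset.univ : Finset V).card : ℝ) ≤
          d * (((Finset.univ : Finset V).card : ℝ) - 1) := le_trans hdens hkey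
      nlinarith
    · have hnV : Nonempty V := by
        obtain ⟨e, _⟩ := hE
        exact Sym2.ind (f := fun _ => Nonempty V) (fun a _ => ⟨a⟩) e
      exact Finset.univ_nonempty
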